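/- Let p_{ψ,θ}(y) = h(y) exp(⟨u(y),θ⟩ − ψ(θ)) be a regular exponential family with minimal sufficient statistic u and strictly convex, differentiable log-partition function ψ on the open set Θ. Let ψ* be the Legendre transform of ψ and μ(θ) = ∇ψ(θ). Then for all θ ∈ Θ and all y, p_{ψ,θ}(y) = b_ψ(y) exp(−Breg_{ψ*}(u(y), μ(θ))), where b_ψ(y) = h(y) exp(ψ*(u(y))). -/

import Mathlib

open InnerProductSpace Set Filter Topology

local notation "⟪" x ", " y "⟫" => @inner ℝ _ _ x y

/-- Gradient inequality for a convex function on a set. -/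
lemma grad_ineq_aux {E : Type*} [NormedAddCommGroup E] [InnerProductSpace ℝ E] [CompleteSpace E]
    {s : Set E} {ψ : E → ℝ} (hc : ConvexOn ℝ s ψ) {a b : E} (ha : a ∈ s) (hb : b ∈ s)
    {g : E} (hg : HasGradientAt ψ g a) :
    ⟪g, b - a⟫ ≤ ψ b - ψ a := by
  have line : HasDerivAt (fun t : ℝ => a + t • (b - a)) (b - a) 0 := by
    simpa using ((hasDerivAt_id (0 : ℝ)).smul_const (b - a)).const_add a
  have h1 : HasFDerivAt ψ (InnerProductSpace.toDual ℝ E g) a :=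
    hasGradientAt_iff_hasFDerivAt.1 hg
  have h1' : HasFDerivAt ψ (InnerProductSpace.toDual ℝ E g) (a + (0 : ℝ) • (b - a)) := by
    simpa using h1
  have hF : HasDerivAt (fun t : ℝ => ψ (a + t • (b - a))) ⟪g, b - a⟫ 0 := by
    have := h1'.comp_hasDerivAt 0 line
    simp only [InnerProductSpace.toDual_apply_apply] at this
    exact this
  have key : Tendsto (slope (fun t : ℝ => ψ (a + t • (b - a))) 0) (𝓝[>] 0)
      (𝓝 ⟪g, b - a⟫) :=
    (hasDerivAt_iff_tendsto_slope.1 hF).mono_left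
      (nhdsWithin_mono 0 (fun t ht => ne_of_gt ht))
  refine le_of_tendsto key ?_
  filter_upwards [Ioo_mem_nhdsGT_of_mem (Set.mem_Ico.2 ⟨le_refl (0 : ℝ), zero_lt_one⟩)]
    with t ht
  have hconv := hc.2 ha hb (by linarith [ht.2] : (0:ℝ) ≤ 1 - t) ht.1.le (by ring)
  have hpt : (1 - t) • a + t • b = a + t • (b - a) := by
    rw [sub_smul, smul_sub, one_smul]; abel
  rw [hpt] at hconv
  rw [slope_def_field]
  have h0 : a + (0:ℝ) • (b - a) = a := by simp
  rw [h0, sub_zero, div_le_iff₀ ht.1]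
  simp only [smul_eq_mul] at hconv
  nlinarith [hconv]

/-- Strict gradient inequality for a strictly convex function. -/
lemma grad_ineq_strict_aux {E : Type*} [NormedAddCommGroup E] [InnerProductSpace ℝ E] [CompleteSpace E]
    {s : Set E} {ψ : E → ℝ} (hc : StrictConvexOn ℝ s ψ) {a b : E} (ha : a ∈ s) (hb : b ∈ s)
    (hne : a ≠ b) {g : E} (hg : HasGradientAt ψ g a) :
    ⟪g, b - a⟫ < ψ b - ψ a := by
  set m := (1/2 : ℝ) • a + (1/2 : ℝ) • b with hm_def
  have hm : m ∈ s := hc.1 ha hb (by norm_num) (by norm_num) (by norm_num)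
  have h1 : ⟪g, m - a⟫ ≤ ψ m - ψ a := grad_ineq_aux hc.convexOn ha hm hg
  have h2 : ψ m < (1/2 : ℝ) * ψ a + (1/2 : ℝ) * ψ b :=
    hc.2 ha hb hne (by norm_num) (by norm_num) (by norm_num)
  have hma : m - a = (1/2 : ℝ) • (b - a) := by
    rw [hm_def, smul_sub]; module
  rw [hma, real_inner_smul_right] at h1
  linarith

/-- Exponential family densities rewrite as a Bregman divergence to the mean parameter:
p_{ψ,θ}(y) = b_ψ(y) exp(−Breg_{ψ*}(u(y), μ(θ))) with b_ψ(y) = h(y) exp(ψ*(u(y))) and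
μ(θ) = ∇ψ(θ). -/
theorem stmt18 {p : ℕ} {𝒴 : Type*}
    (Θ : Set (EuclideanSpace ℝ (Fin p))) (hΘ : IsOpen Θ) (hΘne : Θ.Nonempty)
    (ψ : EuclideanSpace ℝ (Fin p) → ℝ)
    (hconv : StrictConvexOn ℝ Θ ψ)
    (ψ' : EuclideanSpace ℝ (Fin p) → EuclideanSpace ℝ (Fin p))
    (hψ' : ∀ θ ∈ Θ, HasGradientAt ψ (ψ' θ) θ)
    (h : 𝒴 → ℝ) (u : 𝒴 → EuclideanSpace ℝ (Fin p))
    (ψstar : EuclideanSpace ℝ (Fin p) → ℝ)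
    (hψstar : ∀ x, ψstar x
      = ⨆ θ : Θ, ((inner ℝ (θ : EuclideanSpace ℝ (Fin p)) x : ℝ) - ψ θ))
    (ψstar' : EuclideanSpace ℝ (Fin p) → EuclideanSpace ℝ (Fin p))
    (hψstar' : ∀ x, HasGradientAt ψstar (ψstar' x) x) :
    ∀ θ ∈ Θ, ∀ y : 𝒴,
      h y * Real.exp ((inner ℝ (u y) θ : ℝ) - ψ θ)
        = (h y * Real.exp (ψstar (u y)))
          * Real.exp (-(ψstar (u y) - ψstar (ψ' θ)
              - (inner ℝ (u y - ψ' θ) (ψstar' (ψ' θ)) : ℝ))) := by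
  haveI : Nonempty ↥Θ := hΘne.to_subtype
  intro θ hθ y
  -- the fundamental bound: the sup defining ψstar (ψ' θ₀) is attained at θ₀
  have hbound : ∀ θ₀ ∈ Θ, ∀ θ₁ ∈ Θ,
      ⟪θ₁, ψ' θ₀⟫ - ψ θ₁ ≤ ⟪θ₀, ψ' θ₀⟫ - ψ θ₀ := by
    intro θ₀ h₀ θ₁ h₁
    have hg := grad_ineq_aux hconv.convexOn h₀ h₁ (hψ' θ₀ h₀)
    have e : ⟪ψ' θ₀, θ₁ - θ₀⟫ = ⟪θ₁, ψ' θ₀⟫ - ⟪θ₀, ψ' θ₀⟫ := by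
      rw [inner_sub_right, real_inner_comm (ψ' θ₀) θ₁, real_inner_comm (ψ' θ₀) θ₀]
    rw [e] at hg; linarith
  have hBdd : ∀ θ₀ ∈ Θ,
      BddAbove (Set.range fun θ₁ : Θ => ⟪(θ₁ : EuclideanSpace ℝ (Fin p)), ψ' θ₀⟫ - ψ θ₁) := by
    intro θ₀ h₀
    exact ⟨⟪θ₀, ψ' θ₀⟫ - ψ θ₀, Set.forall_mem_range.2 fun θ₁ => hbound θ₀ h₀ θ₁ θ₁.2⟩
  -- (A) : value of ψstar at gradient points
  have hA : ∀ θ₀ ∈ Θ, ψstar (ψ' θ₀) = ⟪θ₀, ψ' θ₀⟫ - ψ θ₀ := by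
    intro θ₀ h₀
    rw [hψstar]
    refine le_antisymm (ciSup_le fun θ₁ => hbound θ₀ h₀ θ₁ θ₁.2) ?_
    exact le_ciSup (hBdd θ₀ h₀) ⟨θ₀, h₀⟩
  -- the effective domain of the sup
  set B : Set (EuclideanSpace ℝ (Fin p)) := {z | BddAbove (Set.range fun θ₁ : Θ => ⟪(θ₁ : EuclideanSpace ℝ (Fin p)), z⟫ - ψ θ₁)} with hB_def
  have hxB : ψ' θ ∈ B := hBdd θ hθ
  -- subgradient inequality on B
  have hsubgrad : ∀ z ∈ B, ψstar (ψ' θ) + (⟪θ, z⟫ - ⟪θ, ψ' θ⟫) ≤ ψstar z := by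
    intro z hz
    have h1 : ⟪θ, z⟫ - ψ θ ≤ ψstar z := by
      rw [hψstar]; exact le_ciSup hz ⟨θ, hθ⟩
    rw [hA θ hθ]; linarith
  -- B is convex
  have hBconv : Convex ℝ B := by
    intro z₁ h₁ z₂ h₂ a b ha hb hab
    obtain ⟨M₁, hM₁⟩ := h₁
    obtain ⟨M₂, hM₂⟩ := h₂
    refine ⟨a * M₁ + b * M₂, Set.forall_mem_range.2 fun θ₁ => ?_⟩
    have e1 : ⟪(θ₁ : EuclideanSpace ℝ (Fin p)), z₁⟫ - ψ θ₁ ≤ M₁ := hM₁ (Set.mem_range_self θ₁)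
    have e2 : ⟪(θ₁ : EuclideanSpace ℝ (Fin p)), z₂⟫ - ψ θ₁ ≤ M₂ := hM₂ (Set.mem_range_self θ₁)
    have l1 : a * (⟪(θ₁ : EuclideanSpace ℝ (Fin p)), z₁⟫ - ψ θ₁) ≤ a * M₁ := mul_le_mul_of_nonneg_left e1 ha
    have l2 : b * (⟪(θ₁ : EuclideanSpace ℝ (Fin p)), z₂⟫ - ψ θ₁) ≤ b * M₂ := mul_le_mul_of_nonneg_left e2 hb
    have expand : ⟪(θ₁ : EuclideanSpace ℝ (Fin p)), a • z₁ + b • z₂⟫ - ψ θ₁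
        = a * (⟪(θ₁ : EuclideanSpace ℝ (Fin p)), z₁⟫ - ψ θ₁) + b * (⟪(θ₁ : EuclideanSpace ℝ (Fin p)), z₂⟫ - ψ θ₁) := by
      rw [inner_add_right, real_inner_smul_right, real_inner_smul_right]
      linear_combination (ψ θ₁) * hab
    rw [expand]; linarith
  have hBgrad : ∀ θ₀ ∈ Θ, ψ' θ₀ ∈ B := hBdd
  -- in every direction there is a point of B strictly on the other side of ψ' θ
  have hstrictpt : ∀ v : EuclideanSpace ℝ (Fin p), v ≠ 0 → ∃ z ∈ B, 0 < ⟪z - ψ' θ, v⟫ := by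
    intro v hv
    obtain ⟨ε, hε, hball⟩ := Metric.isOpen_iff.1 hΘ θ hθ
    have hnv : (0:ℝ) < ‖v‖ := norm_pos_iff.2 hv
    set s : ℝ := ε / (2 * ‖v‖) with hs_def
    have hs : 0 < s := div_pos hε (by positivity)
    have hθ₁ : θ + s • v ∈ Θ := by
      apply hball
      rw [Metric.mem_ball, dist_eq_norm]
      have e : θ + s • v - θ = s • v := by abel
      rw [e, norm_smul, Real.norm_eq_abs, abs_of_pos hs]
      have e2 : s * ‖v‖ = ε / 2 := by
        rw [hs_def]; field_simp
      rw [e2]; linarith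
    have hne : θ ≠ θ + s • v := by
      intro hcontra
      apply hv
      have h0 : s • v = 0 := by
        have := congrArg (fun w => w - θ) hcontra
        simpa using this.symm
      rcases smul_eq_zero.1 h0 with h | h
      · exact absurd h (ne_of_gt hs)
      · exact h
    have g1 := grad_ineq_strict_aux hconv hθ hθ₁ hne (hψ' θ hθ)
    have g2 := grad_ineq_strict_aux hconv hθ₁ hθ hne.symm (hψ' _ hθ₁)
    refine ⟨ψ' (θ + s • v), hBgrad _ hθ₁, ?_⟩
    have e1 : θ + s • v - θ = s • v := by abel
    have e2 : θ - (θ + s • v) = -(s • v) := by abel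
    rw [e1] at g1
    rw [e2, inner_neg_right] at g2
    have hpos : 0 < ⟪ψ' (θ + s • v) - ψ' θ, s • v⟫ := by
      rw [inner_sub_left]; linarith
    rw [real_inner_smul_right] at hpos
    nlinarith [hpos, hs]
  -- ψ' θ is in the interior of B
  have hint : ψ' θ ∈ interior B := by
    by_contra hxint
    rcases Set.eq_empty_or_nonempty (interior B) with hie | hie
    · -- B has empty interior : contained in a proper affine subspace
      have hspan : affineSpan ℝ B ≠ ⊤ := by
        intro htop
        have := (hBconv.interior_nonempty_iff_affineSpan_eq_top).2 htop
        rw [hie] at this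
        exact Set.not_nonempty_empty this
      have hdir : (affineSpan ℝ B).direction ≠ ⊤ := by
        intro htop
        exact hspan ((AffineSubspace.direction_eq_top_iff_of_nonempty
          ⟨_, subset_affineSpan ℝ B hxB⟩).1 htop)
      have hbot : ((affineSpan ℝ B).direction)ᗮ ≠ ⊥ :=
        fun hb => hdir (Submodule.orthogonal_eq_bot_iff.1 hb)
      obtain ⟨v, hvW, hv0⟩ := Submodule.exists_mem_ne_zero_of_ne_bot hbot
      obtain ⟨z, hzB, hzpos⟩ := hstrictpt v hv0
      have hmem : z - ψ' θ ∈ (affineSpan ℝ B).direction := by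
        have := AffineSubspace.vsub_mem_direction
          (subset_affineSpan ℝ B hzB) (subset_affineSpan ℝ B hxB)
        simpa using this
      have hzero := (Submodule.mem_orthogonal _ v).1 hvW (z - ψ' θ) hmem
      rw [hzero] at hzpos
      exact lt_irrefl 0 hzpos
    · -- separate ψ' θ from the nonempty interior of B
      obtain ⟨f, hf⟩ := geometric_hahn_banach_open_point hBconv.interior isOpen_interior hxint
      set v := (InnerProductSpace.toDual ℝ (EuclideanSpace ℝ (Fin p))).symm f with hv_def
      have hfv : ∀ w, ⟪v, w⟫ = f w := fun w => InnerProductSpace.toDual_symm_apply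
      obtain ⟨a₀, ha₀⟩ := hie
      have hv0 : v ≠ 0 := by
        intro h0
        have h1 := hf a₀ ha₀
        rw [← hfv, ← hfv, h0] at h1
        simp at h1
      have hBle : ∀ z ∈ B, f z ≤ f (ψ' θ) := by
        intro z hz
        have hcont : Continuous fun t : ℝ => f (t • a₀ + (1 - t) • z) :=
          f.continuous.comp ((continuous_id.smul continuous_const).add
            ((continuous_const.sub continuous_id).smul continuous_const))
        have tends : Tendsto (fun t : ℝ => f (t • a₀ + (1 - t) • z)) (𝓝[>] (0:ℝ))
            (𝓝 (f z)) := by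
          have := hcont.tendsto' 0 (f z) (by simp)
          exact this.mono_left nhdsWithin_le_nhds
        refine le_of_tendsto tends ?_
        filter_upwards [Ioo_mem_nhdsGT_of_mem (Set.mem_Ico.2 ⟨le_refl (0:ℝ), zero_lt_one⟩)]
          with t ht
        exact (hf _ (hBconv.combo_interior_closure_mem_interior ha₀ (subset_closure hz)
          ht.1 (by linarith [ht.2]) (by ring))).le
      obtain ⟨z, hzB, hzpos⟩ := hstrictpt v hv0
      have h1 := hBle z hzB
      rw [← hfv, ← hfv] at h1
      have h2 : ⟪z - ψ' θ, v⟫ ≤ 0 := by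
        have c1 : ⟪z, v⟫ = ⟪v, z⟫ := real_inner_comm _ _
        have c2 : ⟪ψ' θ, v⟫ = ⟪v, ψ' θ⟫ := real_inner_comm _ _
        rw [inner_sub_left]
        linarith
      linarith
  -- (B) : the gradient of ψstar at ψ' θ equals θ
  have hBkey : ψstar' (ψ' θ) = θ := by
    have hFd : HasFDerivAt ψstar (InnerProductSpace.toDual ℝ (EuclideanSpace ℝ (Fin p)) (ψstar' (ψ' θ))) (ψ' θ) :=
      hasGradientAt_iff_hasFDerivAt.1 (hψstar' _)
    have h2 : HasFDerivAt (fun z : EuclideanSpace ℝ (Fin p) => ⟪θ, z⟫) (InnerProductSpace.toDual ℝ (EuclideanSpace ℝ (Fin p)) θ) (ψ' θ) := by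
      have hfun : (fun z : EuclideanSpace ℝ (Fin p) => ⟪θ, z⟫) = ⇑(InnerProductSpace.toDual ℝ (EuclideanSpace ℝ (Fin p)) θ) := by
        funext z; rw [InnerProductSpace.toDual_apply_apply]
      rw [hfun]
      exact (InnerProductSpace.toDual ℝ (EuclideanSpace ℝ (Fin p)) θ).hasFDerivAt
    have hG : HasFDerivAt (fun z : EuclideanSpace ℝ (Fin p) => ψstar z - ⟪θ, z⟫)
        (InnerProductSpace.toDual ℝ (EuclideanSpace ℝ (Fin p)) (ψstar' (ψ' θ)) - InnerProductSpace.toDual ℝ (EuclideanSpace ℝ (Fin p)) θ)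
        (ψ' θ) := hFd.sub h2
    have hmin : IsLocalMin (fun z : EuclideanSpace ℝ (Fin p) => ψstar z - ⟪θ, z⟫) (ψ' θ) := by
      filter_upwards [mem_interior_iff_mem_nhds.1 hint] with z hz
      have := hsubgrad z hz
      linarith
    have h0 := hmin.hasFDerivAt_eq_zero hG
    have h3 : InnerProductSpace.toDual ℝ (EuclideanSpace ℝ (Fin p)) (ψstar' (ψ' θ) - θ) = 0 := by
      rw [map_sub]; exact h0
    have h4 : ψstar' (ψ' θ) - θ = 0 := by
      apply (InnerProductSpace.toDual ℝ (EuclideanSpace ℝ (Fin p))).injective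
      simpa using h3
    exact sub_eq_zero.1 h4
  -- final algebra
  rw [hBkey, hA θ hθ, mul_assoc, ← Real.exp_add]
  congr 1
  have e1 : ⟪u y - ψ' θ, θ⟫ = ⟪u y, θ⟫ - ⟪ψ' θ, θ⟫ := by rw [inner_sub_left]
  have e2 : ⟪θ, ψ' θ⟫ = ⟪ψ' θ, θ⟫ := real_inner_comm _ _
  rw [e1, e2]
  ring
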